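/- Every K_{2,2}-free graph G on n vertices has a clique cover of size O(n^{3/2}); explicitly, there is an absolute constant C such that every K_{2,2}-free graph on n vertices has a clique cover of size at most C·n^{3/2}. -/

import Mathlib

set_option linter.unusedSectionVars false
set_option linter.unusedVariables false
set_option maxHeartbeats 1000000

open SimpleGraph Finset

/-- A stable (independent) set: pairwise nonadjacent vertices. -/
def IsStableSet {V : Type*} (G : SimpleGraph V) (T : Finset V) : Prop :=
  ∀ ⦃u⦄, u ∈ T → ∀ ⦃v⦄, v ∈ T → u ≠ v → ¬G.Adj u v

/-- `G` is `K_{s,t}`-free. -/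
def KstFree {V : Type*} (G : SimpleGraph V) (s t : ℕ) : Prop :=
  ¬ ∃ A B : Finset V, Disjoint A B ∧ A.card = s ∧ B.card = t ∧
      IsStableSet G A ∧ IsStableSet G B ∧ ∀ a ∈ A, ∀ b ∈ B, G.Adj a b

/-- A clique cover of `G`. -/
def IsCliqueCover {V : Type*} (G : SimpleGraph V) (C : Finset (Finset V)) : Prop :=
  (∀ X ∈ C, G.IsClique (X : Set V)) ∧
    ∀ u v : V, G.Adj u v → ∃ X ∈ C, u ∈ X ∧ v ∈ X

noncomputable def sConst (n : ℕ) : ℝ := 4 * Real.sqrt n + 6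

noncomputable def phi (n : ℕ) (R : ℕ) : ℝ :=
  20 * Real.sqrt R + min (R:ℝ) (sConst n) + sConst n - (sConst n)^2 / max (R:ℝ) (sConst n)

lemma sConst_pos (n : ℕ) : 0 < sConst n := by
  unfold sConst
  have := Real.sqrt_nonneg (n:ℝ)
  linarith

lemma sConst_ge6 (n : ℕ) : 6 ≤ sConst n := by
  unfold sConst
  have := Real.sqrt_nonneg (n:ℝ)
  linarith

lemma sConst_sq_ge (n : ℕ) : 16 * (n:ℝ) ≤ (sConst n)^2 := by
  unfold sConst
  have h : Real.sqrt (n:ℝ) ^ 2 = (n:ℝ) := Real.sq_sqrt (by positivity)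
  have h0 := Real.sqrt_nonneg (n:ℝ)
  nlinarith [h, h0]

lemma phi_zero (n : ℕ) : phi n 0 = 0 := by
  unfold phi
  have hs := sConst_pos n
  rw [Nat.cast_zero, Real.sqrt_zero]
  rw [min_eq_left hs.le, max_eq_right hs.le, sq, mul_div_assoc, div_self (ne_of_gt hs), mul_one]
  ring

lemma phi_le (n R : ℕ) (hRn : R ≤ n) : phi n R ≤ 28 * Real.sqrt n + 12 := by
  unfold phi
  have hs := sConst_pos n
  have h1 : Real.sqrt (R:ℝ) ≤ Real.sqrt n := Real.sqrt_le_sqrt (by exact_mod_cast hRn)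
  have h2 : min (R:ℝ) (sConst n) ≤ sConst n := min_le_right _ _
  have h3 : (0:ℝ) ≤ (sConst n)^2 / max (R:ℝ) (sConst n) := by positivity
  have h4 : sConst n = 4 * Real.sqrt n + 6 := rfl
  linarith

/-- Case A arithmetic -/

private lemma stepA (r γ a b : ℝ) (ha2 : a^2 = r) (hb2 : b^2 = r - γ)
    (ha0 : 0 ≤ a) (hb0 : 0 ≤ b) (hγ1 : 1 ≤ γ) (hA : r ≤ 8*γ^2) :
    1 ≤ 20 * (a - b) := by
  have hba : b ≤ a := by nlinarith
  have ha3 : a ≤ 3*γ := by nlinarith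
  have h1 : (a-b)*(a+b) = γ := by
    calc (a-b)*(a+b) = a^2 - b^2 := by ring
      _ = γ := by rw [ha2, hb2]; ring
  have h2 : γ ≤ (a-b)*(6*γ) := by nlinarith
  nlinarith [h2, hγ1, sub_nonneg.mpr hba]

/-- Case B2 arithmetic -/

private lemma stepB2 (n r γ s : ℝ) (hssq : 16*n ≤ s^2) (hγbig : r^2 - 2*r ≤ 2*n*γ)
    (hs6 : 6 ≤ s) (hrs : s < r) (hγ1 : 1 ≤ γ) (hrg : s ≤ r - γ) (hn0 : 0 ≤ n) :
    1 ≤ s^2/(r-γ) - s^2/r := by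
  have hpos1 : (0:ℝ) < r - γ := by linarith
  have hpos2 : (0:ℝ) < r := by linarith
  have hkey : r * r ≤ s^2 * γ := by nlinarith
  rw [div_sub_div _ _ (ne_of_gt hpos1) (ne_of_gt hpos2), le_div_iff₀ (by positivity)]
  nlinarith [hkey]

/-- Case B3 arithmetic: conclusion about the two non-sqrt terms -/

private lemma stepB3 (t r γ s : ℝ) (ht1 : 1 ≤ t) (hs : s = 4*t + 6)
    (hγbig : r^2 - 2*r ≤ 2*(t*t)*γ) (hrs : s < r) (hrg : r - γ < s) (hγ1 : 1 ≤ γ) :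
    1 ≤ (s - (r - γ)) + (s - s^2/r) := by
  have hrpos : (0:ℝ) < r := by nlinarith
  have hspos : (0:ℝ) < s := by nlinarith
  have hr2 : 4*t + 4 ≤ r - 2 := by nlinarith
  have h10 : r * (4*t+4) ≤ r * (r-2) := mul_le_mul_of_nonneg_left hr2 hrpos.le
  have h5 : r * (4*t+4) ≤ 2*(t*t)*γ := by nlinarith
  have h11 : 4*r*t ≤ 2*(t*t)*γ := by nlinarith
  have hγt : 2*r ≤ γ * t := by nlinarith
  have hterm3 : s - s^2/r = s*(r-s)/r := by field_simp
  have hterm3nn : 0 ≤ s - s^2/r := by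
    rw [hterm3]
    apply div_nonneg _ hrpos.le
    nlinarith
  rcases le_or_gt (r - s) (γ/2) with hcase | hcase
  · -- term2 = γ - (r-s) ≥ γ/2 ≥ 4 (since γ t ≥ 2r > 2s = 8t+12 ⇒ γ ≥ 8)
    have hγ8 : 8 ≤ γ := by nlinarith
    have hterm2 : γ/2 ≤ s - (r - γ) := by linarith
    linarith
  · -- term3 = s(r-s)/r ≥ s(γ/2)/r ≥ 4
    have hterm2nn : 0 ≤ s - (r - γ) := by linarith
    have h6 : s * (γ/2) ≤ s * (r - s) := mul_le_mul_of_nonneg_left (by linarith) hspos.le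
    have h7 : 4*r ≤ s*(γ/2) := by nlinarith
    have hterm3big : 4 ≤ s*(r-s)/r := by
      rw [le_div_iff₀ hrpos]
      nlinarith
    rw [hterm3]
    linarith

lemma phi_step (n R g : ℕ) (hg1 : 1 ≤ g) (hgR : g ≤ R) (hRn : R ≤ n)
    (hd : (R:ℝ) ≤ 8*(g:ℝ)^2 ∨ (R:ℝ)^2 ≤ 2*(R:ℝ) + 2*(n:ℝ)*(g:ℝ)) :
    1 + phi n (R - g) ≤ phi n R := by
  have hn1 : 1 ≤ n := le_trans (le_trans hg1 hgR) hRn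
  have hcast : ((R - g : ℕ) : ℝ) = (R:ℝ) - g := by
    push_cast [hgR]; ring
  have hγ1' : (1:ℝ) ≤ (g:ℝ) := by exact_mod_cast hg1
  have hγr' : (g:ℝ) ≤ (R:ℝ) := by exact_mod_cast hgR
  have hrn' : (R:ℝ) ≤ (n:ℝ) := by exact_mod_cast hRn
  set s := sConst n with hs
  have hs6 : 6 ≤ s := sConst_ge6 n
  have hssq : 16 * (n:ℝ) ≤ s^2 := sConst_sq_ge n
  set r : ℝ := (R:ℝ) with hr
  set γ : ℝ := (g:ℝ) with hγ
  have hγ1 : 1 ≤ γ := hγ1'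
  have hγr : γ ≤ r := hγr'
  have hrn : r ≤ n := hrn'
  have hr1 : 1 ≤ r := le_trans hγ1 hγr
  set a := Real.sqrt r with ha
  set b := Real.sqrt (r - γ) with hb
  have ha0 : 0 ≤ a := Real.sqrt_nonneg _
  have hb0 : 0 ≤ b := Real.sqrt_nonneg _
  have ha2 : a^2 = r := Real.sq_sqrt (by linarith)
  have hb2 : b^2 = r - γ := Real.sq_sqrt (by linarith)
  have hba : b ≤ a := Real.sqrt_le_sqrt (by linarith)
  have hphiR : phi n R = 20*a + min r s + s - s^2 / max r s := rfl
  have hphiRg : phi n (R - g) = 20*b + min (r-γ) s + s - s^2 / max (r-γ) s := by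
    unfold phi
    rw [hcast]
  rw [hphiR, hphiRg]
  have hsqn : Real.sqrt (n:ℝ) * Real.sqrt (n:ℝ) = (n:ℝ) := Real.mul_self_sqrt (by positivity)
  have hsqn0 : (1:ℝ) ≤ Real.sqrt (n:ℝ) := by
    nlinarith [hsqn, Real.sqrt_nonneg (n:ℝ), (by exact_mod_cast hn1 : (1:ℝ) ≤ (n:ℝ))]
  have hs4 : 4 * Real.sqrt n + 6 = s := rfl
  rcases hd with hA | hB
  · -- Case A
    have hmono1 : min (r-γ) s ≤ min r s := min_le_min (by linarith) le_rfl
    have hmax1 : (0:ℝ) < max (r-γ) s := lt_of_lt_of_le (sConst_pos n) (le_max_right _ _)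
    have hmax2 : max (r-γ) s ≤ max r s := max_le_max (by linarith) le_rfl
    have hmono2 : s^2 / max r s ≤ s^2 / max (r-γ) s :=
      div_le_div_of_nonneg_left (by positivity) hmax1 hmax2
    have hgain : 1 ≤ 20 * (a - b) := stepA r γ a b ha2 hb2 ha0 hb0 hγ1 hA
    linarith
  · by_cases hrs : r ≤ s
    · -- B1
      have h1 : min r s = r := min_eq_left hrs
      have h2 : min (r-γ) s = r - γ := min_eq_left (by linarith)
      have h3 : max r s = s := max_eq_right hrs
      have h4 : max (r-γ) s = s := max_eq_right (by linarith)
      rw [h1, h2, h3, h4]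
      linarith [hba, hγ1]
    · push_neg at hrs
      have h1 : min r s = s := min_eq_right hrs.le
      have h3 : max r s = r := max_eq_left hrs.le
      have hγbig : r^2 - 2*r ≤ 2*(n:ℝ)*γ := by linarith
      by_cases hrg : s ≤ r - γ
      · -- B2
        have h2 : min (r-γ) s = s := min_eq_right hrg
        have h4 : max (r-γ) s = r - γ := max_eq_left hrg
        rw [h1, h2, h3, h4]
        have hquad := stepB2 (n:ℝ) r γ s hssq hγbig hs6 hrs hγ1 hrg (by positivity)
        linarith [hba]
      · -- B3
        push_neg at hrg
        have h2 : min (r-γ) s = r - γ := min_eq_left hrg.le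
        have h4 : max (r-γ) s = s := max_eq_right hrg.le
        rw [h1, h2, h3, h4]
        have hγbig' : r^2 - 2*r ≤ 2*(Real.sqrt n * Real.sqrt n)*γ := by
          rw [hsqn]; exact hγbig
        have hmain := stepB3 (Real.sqrt n) r γ s hsqn0 hs4.symm hγbig' hrs hrg hγ1
        -- goal : 1 + (20 b + (r-γ) + s - s^2/s) ≤ 20 a + s + s - s^2/r
        have hdiv : s^2/s = s := by
          rw [sq, mul_div_assoc, div_self (ne_of_gt (sConst_pos n)), mul_one]
        rw [hdiv]
        linarith [hba, hmain]

section Aux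

variable {V : Type} [Fintype V] [DecidableEq V] (G : SimpleGraph V) [DecidableRel G.Adj]

/-- neighbours of `x` inside `F` -/
def nbrIn (F : Finset V) (x : V) : Finset V := F.filter (fun y => G.Adj x y)

/-- twice the number of edges inside `F` -/
def ordE (F : Finset V) : ℕ := ∑ x ∈ F, (nbrIn G F x).card

/-- number of ordered distinct non-adjacent pairs in `D` -/
def ordQ (D : Finset V) : ℕ :=
  ((D ×ˢ D).filter (fun p => p.1 ≠ p.2 ∧ ¬ G.Adj p.1 p.2)).card

lemma common_clique (h22 : KstFree G 2 2) {u v : V} (hne : u ≠ v) (hna : ¬ G.Adj u v)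
    (B : Finset V) (hB : ∀ x ∈ B, G.Adj u x ∧ G.Adj v x) : G.IsClique (B : Set V) := by
  intro x hx y hy hxy
  rw [Finset.mem_coe] at hx hy
  by_contra hadj
  apply h22
  refine ⟨{u, v}, {x, y}, ?_, ?_, ?_, ?_, ?_, ?_⟩
  · rw [Finset.disjoint_left]
    intro a ha hb
    simp only [Finset.mem_insert, Finset.mem_singleton] at ha hb
    rcases ha with rfl | rfl <;> rcases hb with rfl | rfl
    · exact G.loopless.irrefl a (hB a hx).1
    · exact G.loopless.irrefl a (hB a hy).1
    · exact G.loopless.irrefl a (hB a hx).2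
    · exact G.loopless.irrefl a (hB a hy).2
  · rw [Finset.card_insert_of_notMem (by simp [hne]), Finset.card_singleton]
  · rw [Finset.card_insert_of_notMem (by simp [hxy]), Finset.card_singleton]
  · intro a ha b hb hab
    simp only [Finset.mem_insert, Finset.mem_singleton] at ha hb
    rcases ha with rfl | rfl <;> rcases hb with rfl | rfl
    · exact absurd rfl hab
    · exact hna
    · exact fun h => hna h.symm
    · exact absurd rfl hab
  · intro a ha b hb hab
    simp only [Finset.mem_insert, Finset.mem_singleton] at ha hb
    rcases ha with rfl | rfl <;> rcases hb with rfl | rfl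
    · exact absurd rfl hab
    · exact hadj
    · exact fun h => hadj h.symm
    · exact absurd rfl hab
  · intro a ha b hb
    simp only [Finset.mem_insert, Finset.mem_singleton] at ha hb
    rcases ha with rfl | rfl <;> rcases hb with rfl | rfl
    · exact (hB _ hx).1
    · exact (hB _ hy).1
    · exact (hB _ hx).2
    · exact (hB _ hy).2

lemma double_count {α β : Type*} (s : Finset α) (t : Finset β) (r : α → β → Prop)
    [∀ a b, Decidable (r a b)] :
    ∑ x ∈ s, (t.filter (fun y => r x y)).card = ∑ y ∈ t, (s.filter (fun x => r x y)).card := by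
  simp only [Finset.card_filter]
  exact Finset.sum_comm

lemma exists_maxclique {F : Finset V} (hF : F.Nonempty) :
    ∃ K, K ⊆ F ∧ G.IsClique (K : Set V) ∧ K.Nonempty ∧
      (∀ B ⊆ F, G.IsClique (B : Set V) → B.card ≤ K.card) ∧
      (∀ x ∈ F \ K, ∃ y ∈ K, x ≠ y ∧ ¬ G.Adj x y) := by
  classical
  obtain ⟨x0, hx0⟩ := hF
  set S := F.powerset.filter (fun B : Finset V => G.IsClique (B : Set V)) with hS
  have hmem : ∀ B : Finset V, B ∈ S ↔ B ⊆ F ∧ G.IsClique (B : Set V) := by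
    intro B; simp [hS, Finset.mem_filter, Finset.mem_powerset]
  have hSne : S.Nonempty :=
    ⟨{x0}, (hmem _).mpr ⟨Finset.singleton_subset_iff.mpr hx0, by simp⟩⟩
  obtain ⟨K, hKS, hKmax⟩ := Finset.exists_max_image S Finset.card hSne
  rw [hmem] at hKS
  have hmax : ∀ B ⊆ F, G.IsClique (B : Set V) → B.card ≤ K.card := by
    intro B hBF hBc; exact hKmax B ((hmem _).mpr ⟨hBF, hBc⟩)
  have hKne : K.Nonempty := by
    rw [← Finset.card_pos]
    have := hmax {x0} (Finset.singleton_subset_iff.mpr hx0) (by simp)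
    simpa using lt_of_lt_of_le one_pos this
  refine ⟨K, hKS.1, hKS.2, hKne, hmax, ?_⟩
  intro x hx
  rw [Finset.mem_sdiff] at hx
  by_contra hcon
  push_neg at hcon
  have hclique : G.IsClique ((insert x K : Finset V) : Set V) := by
    rw [Finset.coe_insert]
    exact hKS.2.insert (fun b hb hne => hcon b (Finset.mem_coe.mp hb) hne)
  have hsub : insert x K ⊆ F := Finset.insert_subset hx.1 hKS.1
  have := hmax _ hsub hclique
  rw [Finset.card_insert_of_notMem hx.2] at this
  omega

lemma ordQ_split {D K : Finset V} (hK : K ⊆ D)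
    (hnn : ∀ x ∈ D \ K, ∃ y ∈ K, x ≠ y ∧ ¬ G.Adj x y) :
    ordQ G (D \ K) + 2 * (D \ K).card ≤ ordQ G D := by
  classical
  set f : V → V := fun x => if h : ∃ y ∈ K, x ≠ y ∧ ¬ G.Adj x y then h.choose else x with hf
  have hfspec : ∀ x ∈ D \ K, f x ∈ K ∧ x ≠ f x ∧ ¬ G.Adj x (f x) := by
    intro x hx
    have h := hnn x hx
    rw [hf]; simp only [dif_pos h]
    exact ⟨h.choose_spec.1, h.choose_spec.2.1, h.choose_spec.2.2⟩
  set A := ((D \ K) ×ˢ (D \ K)).filter (fun p : V × V => p.1 ≠ p.2 ∧ ¬ G.Adj p.1 p.2) with hA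
  set B1 := (D \ K).image (fun x => (x, f x)) with hB1
  set B2 := (D \ K).image (fun x => (f x, x)) with hB2
  have hAsub : A ∪ (B1 ∪ B2) ⊆ (D ×ˢ D).filter (fun p : V × V => p.1 ≠ p.2 ∧ ¬ G.Adj p.1 p.2) := by
    intro p hp
    simp only [Finset.mem_union, hA, hB1, hB2, Finset.mem_filter, Finset.mem_product,
      Finset.mem_image] at hp ⊢
    rcases hp with ⟨⟨h1, h2⟩, h3⟩ | ⟨x, hx, rfl⟩ | ⟨x, hx, rfl⟩
    · exact ⟨⟨(Finset.mem_sdiff.mp h1).1, (Finset.mem_sdiff.mp h2).1⟩, h3⟩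
    · obtain ⟨hfK, hne, hna⟩ := hfspec x hx
      exact ⟨⟨(Finset.mem_sdiff.mp hx).1, hK hfK⟩, hne, hna⟩
    · obtain ⟨hfK, hne, hna⟩ := hfspec x hx
      exact ⟨⟨hK hfK, (Finset.mem_sdiff.mp hx).1⟩, fun h => hne h.symm, fun h => hna h.symm⟩
  have hd12 : Disjoint B1 B2 := by
    rw [Finset.disjoint_left]
    intro p hp1 hp2
    simp only [hB1, hB2, Finset.mem_image] at hp1 hp2
    obtain ⟨x, hx, rfl⟩ := hp1
    obtain ⟨y, hy, heq⟩ := hp2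
    have h1 := (hfspec x hx).1
    have h2 : x = f y := (congrArg Prod.fst heq).symm
    have : x ∈ K := by rw [h2]; exact (hfspec y hy).1
    exact (Finset.mem_sdiff.mp hx).2 this
  have hdA : Disjoint A (B1 ∪ B2) := by
    rw [Finset.disjoint_left]
    intro p hpA hpB
    simp only [hA, Finset.mem_filter, Finset.mem_product] at hpA
    simp only [hB1, hB2, Finset.mem_union, Finset.mem_image] at hpB
    rcases hpB with ⟨x, hx, rfl⟩ | ⟨x, hx, rfl⟩
    · exact (Finset.mem_sdiff.mp hpA.1.2).2 (hfspec x hx).1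
    · exact (Finset.mem_sdiff.mp hpA.1.1).2 (hfspec x hx).1
  have hc1 : B1.card = (D \ K).card :=
    Finset.card_image_of_injOn (fun x _ y _ h => congrArg Prod.fst h)
  have hc2 : B2.card = (D \ K).card :=
    Finset.card_image_of_injOn (fun x _ y _ h => congrArg Prod.snd h)
  have := Finset.card_le_card hAsub
  rw [Finset.card_union_of_disjoint hdA, Finset.card_union_of_disjoint hd12, hc1, hc2] at this
  unfold ordQ
  rw [← hA]
  omega

lemma turan (w : ℕ) (D : Finset V) (hbd : ∀ B ⊆ D, G.IsClique (B : Set V) → B.card ≤ w) :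
    (D.card : ℝ)^2 ≤ w * ordQ G D + w * D.card := by
  classical
  induction D using Finset.strongInductionOn with
  | _ D ih =>
  rcases D.eq_empty_or_nonempty with rfl | hne
  · simp [ordQ]
  obtain ⟨K, hKD, hKc, hKne, hKmax, hKnn⟩ := exists_maxclique G hne
  have hq := ordQ_split G hKD hKnn
  have hIH := ih (D \ K) (Finset.sdiff_ssubset hKD hKne)
    (fun B hB hc => hbd B (hB.trans Finset.sdiff_subset) hc)
  have hcard : (D \ K).card = D.card - K.card := Finset.card_sdiff_of_subset hKD
  have hKle : K.card ≤ D.card := Finset.card_le_card hKD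
  have hKw : K.card ≤ w := hbd K hKD hKc
  have hK1 : 1 ≤ K.card := Finset.card_pos.mpr hKne
  have hcast : ((D \ K).card : ℝ) = (D.card : ℝ) - K.card := by
    rw [hcard]; push_cast [hKle]; ring
  rw [hcast] at hIH
  have hqr : (ordQ G (D \ K) : ℝ) + 2 * ((D.card:ℝ) - K.card) ≤ ordQ G D := by
    rw [← hcast]; exact_mod_cast hq
  have hwq : (K.card : ℝ) ≤ w := by exact_mod_cast hKw
  have hqD : (K.card : ℝ) ≤ D.card := by exact_mod_cast hKle
  have hw1 : (1:ℝ) ≤ w := by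
    have : 1 ≤ w := le_trans hK1 hKw
    exact_mod_cast this
  have hq0 : (0:ℝ) ≤ ordQ G (D \ K) := by positivity
  nlinarith [hIH, hqr, hwq, hqD, hw1, hq0]

lemma sum_ordQ_nbr_le (h22 : KstFree G 2 2) {F : Finset V} {w : ℕ}
    (hbd : ∀ B ⊆ F, G.IsClique (B : Set V) → B.card ≤ w) :
    ∑ x ∈ F, ordQ G (nbrIn G F x) ≤ w * F.card ^ 2 := by
  classical
  set t := (F ×ˢ F).filter (fun p : V × V => p.1 ≠ p.2 ∧ ¬ G.Adj p.1 p.2) with ht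
  have hrw : ∀ x ∈ F, ordQ G (nbrIn G F x)
      = (t.filter (fun p : V × V => G.Adj x p.1 ∧ G.Adj x p.2)).card := by
    intro x _
    unfold ordQ
    congr 1
    ext p
    simp only [ht, Finset.mem_filter, Finset.mem_product, nbrIn]
    tauto
  rw [Finset.sum_congr rfl hrw]
  rw [double_count F t (fun x p => G.Adj x p.1 ∧ G.Adj x p.2)]
  have hb : ∀ p ∈ t, (F.filter (fun x => G.Adj x p.1 ∧ G.Adj x p.2)).card ≤ w := by
    intro p hp
    simp only [ht, Finset.mem_filter, Finset.mem_product] at hp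
    apply hbd _ (Finset.filter_subset _ _)
    apply common_clique G h22 hp.2.1 hp.2.2
    intro z hz
    rw [Finset.mem_filter] at hz
    exact ⟨hz.2.1.symm, hz.2.2.symm⟩
  calc ∑ p ∈ t, (F.filter (fun x => G.Adj x p.1 ∧ G.Adj x p.2)).card
      ≤ ∑ _p ∈ t, w := Finset.sum_le_sum hb
    _ = t.card * w := by rw [Finset.sum_const, smul_eq_mul]
    _ ≤ F.card ^ 2 * w := by
        apply Nat.mul_le_mul_right
        calc t.card ≤ (F ×ˢ F).card := Finset.card_filter_le _ _
          _ = F.card ^ 2 := by rw [Finset.card_product]; ring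
    _ = w * F.card ^ 2 := by ring

lemma sum_deg_sq_le (h22 : KstFree G 2 2) {F : Finset V} {w : ℕ} (hw1 : 1 ≤ w)
    (hbd : ∀ B ⊆ F, G.IsClique (B : Set V) → B.card ≤ w) :
    ∑ x ∈ F, ((nbrIn G F x).card : ℝ) ^ 2 ≤ 2 * w ^ 2 * (F.card : ℝ) ^ 2 := by
  classical
  have hto : ∀ x ∈ F, ((nbrIn G F x).card : ℝ)^2
      ≤ w * ordQ G (nbrIn G F x) + w * (nbrIn G F x).card := by
    intro x _
    apply turan G w
    intro B hB hc
    exact hbd B (hB.trans (Finset.filter_subset _ _)) hc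
  have h1 : ∑ x ∈ F, ((nbrIn G F x).card : ℝ)^2
      ≤ (w:ℝ) * ∑ x ∈ F, (ordQ G (nbrIn G F x) : ℝ) + w * ∑ x ∈ F, ((nbrIn G F x).card : ℝ) := by
    rw [Finset.mul_sum, Finset.mul_sum, ← Finset.sum_add_distrib]
    exact Finset.sum_le_sum hto
  have h2 : ∑ x ∈ F, (ordQ G (nbrIn G F x) : ℝ) ≤ (w:ℝ) * (F.card:ℝ)^2 := by
    have := sum_ordQ_nbr_le G h22 hbd
    push_cast
    exact_mod_cast this
  have h3 : ∑ x ∈ F, ((nbrIn G F x).card : ℝ) ≤ (F.card:ℝ)^2 := by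
    calc ∑ x ∈ F, ((nbrIn G F x).card : ℝ) ≤ ∑ _x ∈ F, (F.card:ℝ) := by
          apply Finset.sum_le_sum
          intro x _
          exact_mod_cast Nat.cast_le.mpr (Finset.card_filter_le _ _)
      _ = (F.card:ℝ) * F.card := by rw [Finset.sum_const]; push_cast; ring
      _ = (F.card:ℝ)^2 := by ring
  have hw1' : (1:ℝ) ≤ w := by exact_mod_cast hw1
  have hwpos : (0:ℝ) ≤ w := by linarith
  have hc2 : (0:ℝ) ≤ (F.card:ℝ)^2 := by positivity
  nlinarith [h1, h2, h3, mul_le_mul_of_nonneg_left h2 hwpos, mul_le_mul_of_nonneg_left h3 hwpos,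
    mul_le_mul_of_nonneg_right (mul_le_mul_of_nonneg_left hw1' hwpos) hc2]

lemma ordE_eq : ∀ F : Finset V, (ordE G F : ℝ) = ∑ x ∈ F, ((nbrIn G F x).card : ℝ) := by
  intro F; unfold ordE; push_cast; rfl

lemma ordE_sq_le (h22 : KstFree G 2 2) {F : Finset V} {w : ℕ} (hw1 : 1 ≤ w)
    (hbd : ∀ B ⊆ F, G.IsClique (B : Set V) → B.card ≤ w) :
    ((ordE G F : ℝ)) ^ 2 ≤ 2 * w ^ 2 * (F.card : ℝ) ^ 3 := by
  classical
  have hcs := Finset.sum_mul_sq_le_sq_mul_sq F (fun x => ((nbrIn G F x).card : ℝ)) (fun _ => 1)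
  simp only [mul_one, one_pow, Finset.sum_const, nsmul_eq_mul] at hcs
  have h2 := sum_deg_sq_le G h22 hw1 hbd
  rw [ordE_eq]
  calc (∑ x ∈ F, ((nbrIn G F x).card : ℝ))^2
      ≤ (∑ x ∈ F, ((nbrIn G F x).card : ℝ)^2) * F.card := hcs
    _ ≤ (2 * w^2 * (F.card:ℝ)^2) * F.card := by
        apply mul_le_mul_of_nonneg_right h2 (by positivity)
    _ = 2 * w^2 * (F.card:ℝ)^3 := by ring

lemma key_count (h22 : KstFree G 2 2) {U : Finset V} {v : V}
    (hmin : ∀ x ∈ U, (U.filter (fun y => G.Adj v y)).card ≤ (U.filter (fun y => G.Adj x y)).card)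
    {F : Finset V} (hFH : F ⊆ U.filter (fun y => G.Adj v y)) {w : ℕ}
    (hbd : ∀ B ⊆ F, G.IsClique (B : Set V) → B.card ≤ w) :
    ((F.card : ℝ)) ^ 2 ≤ F.card + ordE G F + (Fintype.card V : ℝ) * w := by
  classical
  set H := U.filter (fun y => G.Adj v y) with hH
  set T := U.filter (fun y => y ≠ v ∧ ¬ G.Adj v y) with hT
  set δ := H.card with hδ
  set R := F.card with hR
  have hFU : F ⊆ U := hFH.trans (Finset.filter_subset _ _)
  have hRδ : R ≤ δ := Finset.card_le_card hFH
  -- pointwise bound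
  have hpt : ∀ x ∈ F, δ ≤ 1 + ((F.filter (fun y => G.Adj x y)).card + (δ - R))
      + (T.filter (fun y => G.Adj x y)).card := by
    intro x hxF
    have hxU : x ∈ U := hFU hxF
    have hsub : U.filter (fun y => G.Adj x y) ⊆
        insert v ((H.filter (fun y => G.Adj x y)) ∪ (T.filter (fun y => G.Adj x y))) := by
      intro z hz
      rw [Finset.mem_filter] at hz
      rw [Finset.mem_insert]
      by_cases hzv : z = v
      · exact Or.inl hzv
      by_cases hvz : G.Adj v z
      · exact Or.inr (Finset.mem_union_left _ (by
          rw [Finset.mem_filter, hH, Finset.mem_filter]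
          exact ⟨⟨hz.1, hvz⟩, hz.2⟩))
      · exact Or.inr (Finset.mem_union_right _ (by
          rw [Finset.mem_filter, hT, Finset.mem_filter]
          exact ⟨⟨hz.1, hzv, hvz⟩, hz.2⟩))
    have hHf : (H.filter (fun y => G.Adj x y)).card
        ≤ (F.filter (fun y => G.Adj x y)).card + (δ - R) := by
      have hsub2 : H.filter (fun y => G.Adj x y) ⊆ (F.filter (fun y => G.Adj x y)) ∪ (H \ F) := by
        intro z hz
        rw [Finset.mem_filter] at hz
        by_cases hzF : z ∈ F
        · exact Finset.mem_union_left _ (Finset.mem_filter.mpr ⟨hzF, hz.2⟩)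
        · exact Finset.mem_union_right _ (Finset.mem_sdiff.mpr ⟨hz.1, hzF⟩)
      calc (H.filter (fun y => G.Adj x y)).card ≤ _ := Finset.card_le_card hsub2
        _ ≤ (F.filter (fun y => G.Adj x y)).card + (H \ F).card := Finset.card_union_le _ _
        _ = (F.filter (fun y => G.Adj x y)).card + (δ - R) := by
            rw [Finset.card_sdiff_of_subset hFH]
    calc δ ≤ (U.filter (fun y => G.Adj x y)).card := hmin x hxU
      _ ≤ (insert v ((H.filter (fun y => G.Adj x y)) ∪ (T.filter (fun y => G.Adj x y)))).card :=
          Finset.card_le_card hsub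
      _ ≤ 1 + ((H.filter (fun y => G.Adj x y)) ∪ (T.filter (fun y => G.Adj x y))).card := by
          have := Finset.card_insert_le v ((H.filter (fun y => G.Adj x y)) ∪ (T.filter (fun y => G.Adj x y)))
          omega
      _ ≤ 1 + ((H.filter (fun y => G.Adj x y)).card + (T.filter (fun y => G.Adj x y)).card) := by
          have := Finset.card_union_le (H.filter (fun y => G.Adj x y))
            (T.filter (fun y => G.Adj x y))
          omega
      _ ≤ 1 + ((F.filter (fun y => G.Adj x y)).card + (δ - R))
          + (T.filter (fun y => G.Adj x y)).card := by omega
  -- sum of T-degrees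
  have hTsum : ∑ x ∈ F, (T.filter (fun y => G.Adj x y)).card ≤ Fintype.card V * w := by
    rw [double_count F T (fun x y => G.Adj x y)]
    have hb : ∀ y ∈ T, (F.filter (fun x => G.Adj x y)).card ≤ w := by
      intro y hy
      rw [hT, Finset.mem_filter] at hy
      apply hbd _ (Finset.filter_subset _ _)
      apply common_clique G h22 hy.2.1 (fun h => hy.2.2 h.symm)
      intro z hz
      rw [Finset.mem_filter] at hz
      have hzH : z ∈ H := hFH hz.1
      rw [hH, Finset.mem_filter] at hzH
      exact ⟨hz.2.symm, hzH.2⟩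
    calc ∑ y ∈ T, (F.filter (fun x => G.Adj x y)).card ≤ ∑ _y ∈ T, w := Finset.sum_le_sum hb
      _ = T.card * w := by rw [Finset.sum_const, smul_eq_mul]
      _ ≤ Fintype.card V * w := Nat.mul_le_mul_right _ (Finset.card_le_univ _)
  -- aggregate in ℕ
  have hagg : δ * R ≤ R * (1 + (δ - R)) + ordE G F + Fintype.card V * w := by
    calc δ * R = ∑ _x ∈ F, δ := by rw [Finset.sum_const, smul_eq_mul, mul_comm]
      _ ≤ ∑ x ∈ F, (1 + ((F.filter (fun y => G.Adj x y)).card + (δ - R))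
          + (T.filter (fun y => G.Adj x y)).card) := Finset.sum_le_sum hpt
      _ = ∑ x ∈ F, (1 + (δ - R)) + ∑ x ∈ F, (F.filter (fun y => G.Adj x y)).card
          + ∑ x ∈ F, (T.filter (fun y => G.Adj x y)).card := by
          rw [← Finset.sum_add_distrib, ← Finset.sum_add_distrib]
          apply Finset.sum_congr rfl
          intro x _; ring
      _ = R * (1 + (δ - R)) + ordE G F + ∑ x ∈ F, (T.filter (fun y => G.Adj x y)).card := by
          rw [Finset.sum_const, smul_eq_mul]
          rfl
      _ ≤ R * (1 + (δ - R)) + ordE G F + Fintype.card V * w := by omega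
  -- cast to ℝ
  have hcast : ((δ - R : ℕ) : ℝ) = (δ : ℝ) - R := by
    push_cast [hRδ]; ring
  have hagg' : (δ:ℝ) * R ≤ R * (1 + ((δ:ℝ) - R)) + ordE G F + (Fintype.card V : ℝ) * w := by
    have := hagg
    have hc : ((δ * R : ℕ):ℝ) ≤ ((R * (1 + (δ - R)) + ordE G F + Fintype.card V * w : ℕ):ℝ) :=
      Nat.cast_le.mpr this
    push_cast [hRδ] at hc
    push_cast
    linarith
  nlinarith [hagg']

lemma dichotomy (h22 : KstFree G 2 2) {U : Finset V} {v : V}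
    (hmin : ∀ x ∈ U, (U.filter (fun y => G.Adj v y)).card ≤ (U.filter (fun y => G.Adj x y)).card)
    {F : Finset V} (hFH : F ⊆ U.filter (fun y => G.Adj v y)) (hFne : F.Nonempty) :
    ∃ K, K ⊆ F ∧ G.IsClique (K : Set V) ∧ K.Nonempty ∧
      ((F.card:ℝ) ≤ 8*(K.card:ℝ)^2 ∨
       (F.card:ℝ)^2 ≤ 2*(F.card:ℝ) + 2*(Fintype.card V:ℝ)*(K.card:ℝ)) := by
  obtain ⟨K, hKF, hKc, hKne, hKmax, _⟩ := exists_maxclique G hFne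
  refine ⟨K, hKF, hKc, hKne, ?_⟩
  have hw1 : 1 ≤ K.card := Finset.card_pos.mpr hKne
  have hkey := key_count G h22 hmin hFH hKmax
  have hesq := ordE_sq_le G h22 hw1 hKmax
  by_cases hc : (F.card:ℝ)^2 ≤ 2*(F.card:ℝ) + 2*(Fintype.card V:ℝ)*(K.card:ℝ)
  · exact Or.inr hc
  · left
    push_neg at hc
    have hR1 : (1:ℝ) ≤ (F.card:ℝ) := by exact_mod_cast Finset.card_pos.mpr hFne
    have hw1' : (1:ℝ) ≤ (K.card:ℝ) := by exact_mod_cast hw1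
    have hE0 : (0:ℝ) ≤ (ordE G F:ℝ) := by positivity
    have hEhalf : (F.card:ℝ)^2/2 ≤ (ordE G F:ℝ) := by nlinarith [hkey, hc]
    have h4 : ((F.card:ℝ)^2/2)^2 ≤ ((ordE G F:ℝ))^2 := by nlinarith [hEhalf, hE0]
    have hR3 : (0:ℝ) < (F.card:ℝ)^3 := by positivity
    nlinarith [h4, hesq, hR1, hR3]

lemma cover_nbhd (h22 : KstFree G 2 2) {U : Finset V} {v : V}
    (hmin : ∀ x ∈ U, (U.filter (fun y => G.Adj v y)).card ≤ (U.filter (fun y => G.Adj x y)).card)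
    (F : Finset V) :
    F ⊆ U.filter (fun y => G.Adj v y) →
    ∃ 𝒦 : Finset (Finset V), (∀ K ∈ 𝒦, G.IsClique (K : Set V) ∧ K ⊆ F) ∧
      (∀ x ∈ F, ∃ K ∈ 𝒦, x ∈ K) ∧ (𝒦.card : ℝ) ≤ phi (Fintype.card V) F.card := by
  induction F using Finset.strongInductionOn with
  | _ F ih =>
  intro hFH
  rcases F.eq_empty_or_nonempty with rfl | hFne
  · refine ⟨∅, by simp, by simp, ?_⟩
    simp [phi_zero]
  obtain ⟨K, hKF, hKc, hKne, hdich⟩ := dichotomy G h22 hmin hFH hFne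
  obtain ⟨𝒦', h1', h2', h3'⟩ := ih (F \ K) (Finset.sdiff_ssubset hKF hKne)
    ((Finset.sdiff_subset).trans hFH)
  refine ⟨insert K 𝒦', ?_, ?_, ?_⟩
  · intro X hX
    rcases Finset.mem_insert.mp hX with rfl | hX
    · exact ⟨hKc, hKF⟩
    · exact ⟨(h1' X hX).1, (h1' X hX).2.trans Finset.sdiff_subset⟩
  · intro x hx
    by_cases hxK : x ∈ K
    · exact ⟨K, Finset.mem_insert_self _ _, hxK⟩
    · obtain ⟨X, hX, hxX⟩ := h2' x (Finset.mem_sdiff.mpr ⟨hx, hxK⟩)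
      exact ⟨X, Finset.mem_insert_of_mem hX, hxX⟩
  · have hcard : (insert K 𝒦').card ≤ 𝒦'.card + 1 := Finset.card_insert_le _ _
    have hFn : F.card ≤ Fintype.card V := Finset.card_le_univ F
    have hstep := phi_step (Fintype.card V) F.card K.card (Finset.card_pos.mpr hKne)
      (Finset.card_le_card hKF) hFn hdich
    have hsd : (F \ K).card = F.card - K.card := Finset.card_sdiff_of_subset hKF
    calc ((insert K 𝒦').card : ℝ) ≤ (𝒦'.card : ℝ) + 1 := by exact_mod_cast hcard
      _ ≤ phi (Fintype.card V) ((F \ K).card) + 1 := by linarith [h3']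
      _ = 1 + phi (Fintype.card V) (F.card - K.card) := by rw [hsd]; ring
      _ ≤ phi (Fintype.card V) F.card := hstep

lemma main_cover (h22 : KstFree G 2 2) (U : Finset V) :
    ∃ 𝒞 : Finset (Finset V), (∀ X ∈ 𝒞, G.IsClique (X : Set V)) ∧
      (∀ a b : V, G.Adj a b → a ∈ U → b ∈ U → ∃ X ∈ 𝒞, a ∈ X ∧ b ∈ X) ∧
      (𝒞.card : ℝ) ≤ (28 * Real.sqrt (Fintype.card V) + 13) * U.card := by
  induction U using Finset.strongInductionOn with
  | _ U ih =>
  rcases U.eq_empty_or_nonempty with rfl | hUne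
  · exact ⟨∅, by simp, by simp, by simp⟩
  obtain ⟨v, hvU, hvmin⟩ := Finset.exists_min_image U
    (fun x => (U.filter (fun y => G.Adj x y)).card) hUne
  obtain ⟨𝒞', hc1, hc2, hc3⟩ := ih (U.erase v) (Finset.erase_ssubset hvU)
  obtain ⟨𝒦, hk1, hk2, hk3⟩ := cover_nbhd G h22 hvmin
    (U.filter (fun y => G.Adj v y)) (Finset.Subset.refl _)
  refine ⟨𝒞' ∪ 𝒦.image (insert v), ?_, ?_, ?_⟩
  · intro X hX
    rcases Finset.mem_union.mp hX with hX | hX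
    · exact hc1 X hX
    · obtain ⟨K, hK, rfl⟩ := Finset.mem_image.mp hX
      have hKsub := (hk1 K hK).2
      rw [Finset.coe_insert]
      apply (hk1 K hK).1.insert
      intro b hb _
      have := hKsub (Finset.mem_coe.mp hb)
      exact (Finset.mem_filter.mp this).2
  · intro a b hab haU hbU
    by_cases hav : a = v
    · subst hav
      have hbH : b ∈ U.filter (fun y => G.Adj a y) := Finset.mem_filter.mpr ⟨hbU, hab⟩
      obtain ⟨K, hK, hbK⟩ := hk2 b hbH
      refine ⟨insert a K, Finset.mem_union_right _ (Finset.mem_image_of_mem _ hK), ?_, ?_⟩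
      · exact Finset.mem_insert_self _ _
      · exact Finset.mem_insert_of_mem hbK
    by_cases hbv : b = v
    · subst hbv
      have haH : a ∈ U.filter (fun y => G.Adj b y) := Finset.mem_filter.mpr ⟨haU, hab.symm⟩
      obtain ⟨K, hK, haK⟩ := hk2 a haH
      refine ⟨insert b K, Finset.mem_union_right _ (Finset.mem_image_of_mem _ hK), ?_, ?_⟩
      · exact Finset.mem_insert_of_mem haK
      · exact Finset.mem_insert_self _ _
    · obtain ⟨X, hX, hX2⟩ := hc2 a b hab (Finset.mem_erase.mpr ⟨hav, haU⟩)
        (Finset.mem_erase.mpr ⟨hbv, hbU⟩)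
      exact ⟨X, Finset.mem_union_left _ hX, hX2⟩
  · have hδn : (U.filter (fun y => G.Adj v y)).card ≤ Fintype.card V :=
      Finset.card_le_univ _
    have hphile := phi_le (Fintype.card V) (U.filter (fun y => G.Adj v y)).card hδn
    have hUe : ((U.erase v).card : ℝ) = (U.card : ℝ) - 1 := by
      rw [Finset.card_erase_of_mem hvU]
      have hU1 : 1 ≤ U.card := Finset.card_pos.mpr hUne
      push_cast [hU1]
      ring
    have hU1' : (1:ℝ) ≤ (U.card:ℝ) := by
      exact_mod_cast Finset.card_pos.mpr hUne
    have hsq0 : (0:ℝ) ≤ Real.sqrt (Fintype.card V) := Real.sqrt_nonneg _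
    calc ((𝒞' ∪ 𝒦.image (insert v)).card : ℝ)
        ≤ (𝒞'.card : ℝ) + ((𝒦.image (insert v)).card : ℝ) := by
          exact_mod_cast Finset.card_union_le _ _
      _ ≤ (𝒞'.card : ℝ) + (𝒦.card : ℝ) := by
          have := Finset.card_image_le (s := 𝒦) (f := insert v)
          have h' : ((𝒦.image (insert v)).card : ℝ) ≤ (𝒦.card : ℝ) := by exact_mod_cast this
          linarith
      _ ≤ (28 * Real.sqrt (Fintype.card V) + 13) * ((U.card:ℝ) - 1)
          + (28 * Real.sqrt (Fintype.card V) + 12) := by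
          rw [← hUe]
          linarith [hc3, hk3, hphile]
      _ ≤ (28 * Real.sqrt (Fintype.card V) + 13) * U.card := by nlinarith [hsq0, hU1']

end Aux

/-- There is an absolute constant `C` such that every `K_{2,2}`-free graph on `n`
vertices has a clique cover of size at most `C·n^{3/2}`. -/
theorem stmt_14 :
    ∃ C : ℝ, 0 < C ∧ ∀ (V : Type) [Fintype V] (G : SimpleGraph V),
      KstFree G 2 2 →
      ∃ 𝒞 : Finset (Finset V), IsCliqueCover G 𝒞 ∧
        (𝒞.card : ℝ) ≤ C * (Fintype.card V : ℝ) ^ ((3 : ℝ) / 2) := by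
  classical
  refine ⟨41, by norm_num, ?_⟩
  intro V _ G h22
  obtain ⟨𝒞, h1, h2, h3⟩ := main_cover G h22 Finset.univ
  refine ⟨𝒞, ⟨h1, fun u v huv => h2 u v huv (Finset.mem_univ _) (Finset.mem_univ _)⟩, ?_⟩
  rw [Finset.card_univ] at h3
  rcases Nat.eq_zero_or_pos (Fintype.card V) with h0 | hpos
  · rw [h0] at h3 ⊢
    simp only [Nat.cast_zero] at h3 ⊢
    rw [Real.zero_rpow (by norm_num)]
    simpa using h3
  · have hn1 : (1:ℝ) ≤ (Fintype.card V : ℝ) := by exact_mod_cast hpos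
    have hsq1 : (1:ℝ) ≤ Real.sqrt (Fintype.card V) := by
      rw [show (1:ℝ) = Real.sqrt 1 by simp]
      exact Real.sqrt_le_sqrt hn1
    have hrpow : ((Fintype.card V : ℝ)) ^ ((3:ℝ)/2)
        = (Fintype.card V : ℝ) * Real.sqrt (Fintype.card V) := by
      rw [show (3:ℝ)/2 = 1 + 1/2 by norm_num, Real.rpow_add (by linarith), Real.rpow_one,
        Real.sqrt_eq_rpow]
    rw [hrpow]
    have hn0 : (0:ℝ) ≤ (Fintype.card V : ℝ) := by linarith
    nlinarith [h3, hsq1, hn1, hn0]
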